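/- Let γ : [0,1] → ℝ³ \ {0} be a C^∞ map with γ(t) and γ'(t) linearly independent for every t, with γ(s) and γ(t) linearly dependent only if s = t, and with h(t) = det(γ(t), γ'(t), γ''(t)) ≠ 0 for all t ∈ [0,1] (an arc in the projective plane free of inflection points). Assume the arc is free of sextactic points: there is no t₀ ∈ [0,1] and nonzero quadratic form Q on ℝ³ such that t ↦ Q(γ(t)) vanishes to order at least 6 at t₀. Then the osculating conics at distinct points do not meet: for all s ≠ t in [0,1], if Q_s and Q_t are nonzero quadratic forms on ℝ³ such that Q_s(γ(·)) vanishes to order at least 5 at s and Q_t(γ(·)) vanishes to order at least 5 at t, then {v ∈ ℝ³ : Q_s(v) = 0} ∩ {v ∈ ℝ³ : Q_t(v) = 0} = {0}. -/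

import Mathlib

noncomputable section
open Matrix

/-- We model ℝ³ as `Fin 3 → ℝ`. -/
abbrev V3 := Fin 3 → ℝ

/-- Determinant of three vectors in ℝ³. -/
def det3 (u v w : V3) : ℝ := Matrix.det (Matrix.of ![u, v, w])

/-- `hdet γ t = det(γ(t), γ'(t), γ''(t))`. -/
def hdet (γ : ℝ → V3) (t : ℝ) : ℝ := det3 (γ t) (deriv γ t) (deriv (deriv γ) t)

/-- A real function vanishes to order at least `k` at `t₀` if its value and
first `k-1` derivatives vanish there. -/
def VanishesToOrder (f : ℝ → ℝ) (k : ℕ) (t₀ : ℝ) : Prop :=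
  ∀ j < k, iteratedDeriv j f t₀ = 0

@[simp] lemma vec6_0 (a b c d e f : ℝ) : ![a,b,c,d,e,f] 0 = a := rfl
@[simp] lemma vec6_1 (a b c d e f : ℝ) : ![a,b,c,d,e,f] 1 = b := rfl
@[simp] lemma vec6_2 (a b c d e f : ℝ) : ![a,b,c,d,e,f] 2 = c := rfl
@[simp] lemma vec6_3 (a b c d e f : ℝ) : ![a,b,c,d,e,f] 3 = d := rfl
@[simp] lemma vec6_4 (a b c d e f : ℝ) : ![a,b,c,d,e,f] 4 = e := rfl
@[simp] lemma vec6_5 (a b c d e f : ℝ) : ![a,b,c,d,e,f] 5 = f := rfl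

/-- Veronese coordinates. -/
def nuV (v : V3) : Fin 6 → ℝ := ![v 0 * v 0, v 1 * v 1, v 2 * v 2, v 0 * v 1, v 0 * v 2, v 1 * v 2]

/-- square-of-linear-form coefficients. -/
def mvec (c : V3) : Fin 6 → ℝ :=
  ![c 0 * c 0, c 1 * c 1, c 2 * c 2, 2 * (c 0 * c 1), 2 * (c 0 * c 2), 2 * (c 1 * c 2)]

def cross3 (a b : V3) : V3 :=
  ![a 1 * b 2 - a 2 * b 1, a 2 * b 0 - a 0 * b 2, a 0 * b 1 - a 1 * b 0]

lemma mvec_dot (c : V3) (v : V3) : mvec c ⬝ᵥ nuV v = (c ⬝ᵥ v) ^ 2 := by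
  simp [dotProduct, Fin.sum_univ_six, Fin.sum_univ_three, mvec, nuV]
  ring

lemma cross3_dot (a b x : V3) : cross3 a b ⬝ᵥ x = det3 a b x := by
  simp [dotProduct, Fin.sum_univ_three, cross3, det3, Matrix.det_fin_three]
  ring

/-- quadratic form from coefficient vector -/
def quadOf (q : Fin 6 → ℝ) : QuadraticForm ℝ V3 :=
  (Matrix.of ![![q 0, q 3, q 4], ![0, q 1, q 5], ![0, 0, q 2]]).toQuadraticMap'

lemma quadOf_apply (q : Fin 6 → ℝ) (v : V3) : quadOf q v = q ⬝ᵥ nuV v := by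
  simp [quadOf, Matrix.toQuadraticMap', Matrix.toQuadraticForm', LinearMap.BilinMap.toQuadraticMap_apply,
    Matrix.toLinearMap₂'_apply', dotProduct, Matrix.mulVec, Fin.sum_univ_three,
    Fin.sum_univ_six, nuV, Matrix.vecHead, Matrix.vecTail]
  ring

lemma quadOf_ne_zero {q : Fin 6 → ℝ} (hq : q ≠ 0) : quadOf q ≠ 0 := by
  intro h
  apply hq
  have e : ∀ v, quadOf q v = 0 := fun v => by rw [h]; rfl
  have h0 := e (Pi.single 0 1); have h1 := e (Pi.single 1 1); have h2 := e (Pi.single 2 1)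
  have h01 := e (Pi.single 0 1 + Pi.single 1 1)
  have h02 := e (Pi.single 0 1 + Pi.single 2 1)
  have h12 := e (Pi.single 1 1 + Pi.single 2 1)
  simp [quadOf_apply, dotProduct, Fin.sum_univ_six, nuV, Pi.single_apply] at h0 h1 h2 h01 h02 h12
  funext i
  fin_cases i <;> simp_all


def E3 (i : Fin 3) : V3 := Pi.single i 1

/-- coefficient vector of a quadratic form -/
def coeffQ (Q : QuadraticForm ℝ V3) : Fin 6 → ℝ :=
  ![Q (E3 0), Q (E3 1), Q (E3 2), QuadraticMap.polar Q (E3 0) (E3 1),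
    QuadraticMap.polar Q (E3 0) (E3 2), QuadraticMap.polar Q (E3 1) (E3 2)]

lemma quad_add (Q : QuadraticForm ℝ V3) (x y : V3) :
    Q (x + y) = Q x + Q y + QuadraticMap.polar Q x y := by
  rw [QuadraticMap.polar]; ring

lemma coeffQ_repr (Q : QuadraticForm ℝ V3) (v : V3) : Q v = coeffQ Q ⬝ᵥ nuV v := by
  have hv : v = v 0 • E3 0 + (v 1 • E3 1 + v 2 • E3 2) := by
    funext i; fin_cases i <;> simp [E3, Pi.single_apply]
  have key : Q v = Q (v 0 • E3 0) + (Q (v 1 • E3 1) + Q (v 2 • E3 2)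
      + QuadraticMap.polar Q (v 1 • E3 1) (v 2 • E3 2))
      + (QuadraticMap.polar Q (v 0 • E3 0) (v 1 • E3 1)
         + QuadraticMap.polar Q (v 0 • E3 0) (v 2 • E3 2)) := by
    conv_lhs => rw [hv]
    rw [quad_add, quad_add, QuadraticMap.polar_add_right]
  rw [key]
  simp only [QuadraticMap.map_smul, QuadraticMap.polar_smul_left, QuadraticMap.polar_smul_right,
    smul_eq_mul, coeffQ, dotProduct, Fin.sum_univ_six, nuV]
  simp only [vec6_0, vec6_1, vec6_2, vec6_3, vec6_4, vec6_5]
  ring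

lemma coeffQ_ne_zero {Q : QuadraticForm ℝ V3} (hQ : Q ≠ 0) : coeffQ Q ≠ 0 := by
  intro h
  apply hQ
  ext v
  rw [coeffQ_repr, h]
  simp

lemma itd_diff {f : ℝ → ℝ} (hf : ContDiff ℝ (⊤:ℕ∞) f) (n : ℕ) :
    Differentiable ℝ (iteratedDeriv n f) :=
  (contDiff_iff_iteratedDeriv.1 hf).2 n (by exact_mod_cast WithTop.coe_lt_top n)

lemma itd_cont {f : ℝ → ℝ} (hf : ContDiff ℝ (⊤:ℕ∞) f) (n : ℕ) :
    Continuous (iteratedDeriv n f) :=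
  (contDiff_iff_iteratedDeriv.1 hf).1 n le_top

lemma itd_smooth {f : ℝ → ℝ} (hf : ContDiff ℝ (⊤:ℕ∞) f) (n : ℕ) :
    ContDiff ℝ (⊤:ℕ∞) (iteratedDeriv n f) := by
  induction n with
  | zero => simpa [iteratedDeriv_zero] using hf
  | succ n ih => rw [iteratedDeriv_succ]; exact (contDiff_infty_iff_deriv.mp ih).2

lemma deriv_smooth {f : ℝ → ℝ} (hf : ContDiff ℝ (⊤:ℕ∞) f) :
    ContDiff ℝ (⊤:ℕ∞) (deriv f) := (contDiff_infty_iff_deriv.mp hf).2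

lemma iteratedDeriv_lincomb {f : Fin 6 → ℝ → ℝ} (hf : ∀ i, ContDiff ℝ (⊤:ℕ∞) (f i))
    (q : Fin 6 → ℝ) (n : ℕ) :
    iteratedDeriv n (fun x => ∑ i, q i * f i x) = fun x => ∑ i, q i * iteratedDeriv n (f i) x := by
  induction n with
  | zero => simp [iteratedDeriv_zero]
  | succ n ih =>
    rw [iteratedDeriv_succ, ih]
    funext x
    rw [deriv_fun_sum (fun i _ => (((itd_diff (hf i) n) x).const_mul (q i)))]
    refine Finset.sum_congr rfl fun i _ => ?_
    rw [deriv_const_mul _ ((itd_diff (hf i) n) x), ← iteratedDeriv_succ]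

lemma hasDerivAt_dot {ι : Type*} [Fintype ι] {f g : ℝ → ι → ℝ} {f' g' : ι → ℝ} {x : ℝ}
    (hf : ∀ i, HasDerivAt (fun u => f u i) (f' i) x)
    (hg : ∀ i, HasDerivAt (fun u => g u i) (g' i) x) :
    HasDerivAt (fun u => f u ⬝ᵥ g u) (f' ⬝ᵥ g x + f x ⬝ᵥ g') x := by
  have := HasDerivAt.fun_sum (u := Finset.univ) (fun i _ => (hf i).mul (hg i))
  simpa [dotProduct, Finset.sum_add_distrib] using this

section Curve

variable (γ : ℝ → V3)

def Wfun (i : Fin 6) : ℝ → ℝ := fun x => nuV (γ x) i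

def wd (j : ℕ) (u : ℝ) : Fin 6 → ℝ := fun i => iteratedDeriv j (Wfun γ i) u

def Mw (u : ℝ) : Matrix (Fin 6) (Fin 6) ℝ := Matrix.of fun j i => wd γ (j : ℕ) u i

def Dw (u : ℝ) : ℝ := (Mw γ u).det

def pw (u : ℝ) : Fin 6 → ℝ := fun i => ((Mw γ u).updateRow 5 (Pi.single i 1)).det

def pw' (u : ℝ) : Fin 6 → ℝ := fun i => deriv (fun x => pw γ x i) u

variable {γ}

lemma comp_smooth (hγ : ContDiff ℝ (⊤:ℕ∞) γ) (i : Fin 3) : ContDiff ℝ (⊤:ℕ∞) (fun x => γ x i) := contDiff_pi.mp hγ i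

lemma Wfun_smooth (hγ : ContDiff ℝ (⊤:ℕ∞) γ) (i : Fin 6) : ContDiff ℝ (⊤:ℕ∞) (Wfun γ i) := by
  fin_cases i <;>
    · show ContDiff ℝ (⊤:ℕ∞) fun x => nuV (γ x) _
      simp only [nuV, vec6_0, vec6_1, vec6_2, vec6_3, vec6_4, vec6_5]
      first
      | exact (comp_smooth hγ 0).mul (comp_smooth hγ 0)
      | exact (comp_smooth hγ 1).mul (comp_smooth hγ 1)
      | exact (comp_smooth hγ 2).mul (comp_smooth hγ 2)
      | exact (comp_smooth hγ 0).mul (comp_smooth hγ 1)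
      | exact (comp_smooth hγ 0).mul (comp_smooth hγ 2)
      | exact (comp_smooth hγ 1).mul (comp_smooth hγ 2)

lemma wd_smooth (hγ : ContDiff ℝ (⊤:ℕ∞) γ) (j : ℕ) (i : Fin 6) : ContDiff ℝ (⊤:ℕ∞) (fun u => wd γ j u i) :=
  itd_smooth (Wfun_smooth hγ i) j

lemma wd_deriv (hγ : ContDiff ℝ (⊤:ℕ∞) γ) (j : ℕ) (u : ℝ) (i : Fin 6) :
    HasDerivAt (fun x => wd γ j x i) (wd γ (j+1) u i) u := by
  have : wd γ (j+1) u i = deriv (fun x => wd γ j x i) u := by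
    show iteratedDeriv (j+1) (Wfun γ i) u = _
    rw [iteratedDeriv_succ]
    rfl
  rw [this]
  exact ((itd_diff (Wfun_smooth hγ i) j) u).hasDerivAt

lemma contDiff_det6 {A : ℝ → Matrix (Fin 6) (Fin 6) ℝ}
    (h : ∀ i j, ContDiff ℝ (⊤:ℕ∞) fun u => A u i j) :
    ContDiff ℝ (⊤:ℕ∞) fun u => (A u).det := by
  simp only [Matrix.det_apply']
  apply ContDiff.sum
  intro σ _
  have : ∀ u, (Equiv.Perm.sign σ : ℝ) • ∏ i, A u (σ i) i = (Equiv.Perm.sign σ : ℝ) * ∏ i, A u (σ i) i :=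
    fun u => rfl
  exact contDiff_const.mul (contDiff_prod (fun i _ => h (σ i) i))

lemma det_updateRow_lin {M : Matrix (Fin 6) (Fin 6) ℝ} {r : Fin 6} (s : Finset (Fin 6))
    (c : Fin 6 → ℝ) (v : Fin 6 → Fin 6 → ℝ) :
    (M.updateRow r (∑ i ∈ s, c i • v i)).det = ∑ i ∈ s, c i * (M.updateRow r (v i)).det := by
  induction s using Finset.induction_on with
  | empty =>
    simp only [Finset.sum_empty]
    rw [show (0 : Fin 6 → ℝ) = (0:ℝ) • (0 : Fin 6 → ℝ) by simp, Matrix.det_updateRow_smul]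
    simp
  | insert _ _ hk ih =>
    rw [Finset.sum_insert hk, Matrix.det_updateRow_add, Matrix.det_updateRow_smul,
      Finset.sum_insert hk, ih]

lemma pw_dot (u : ℝ) (x : Fin 6 → ℝ) : pw γ u ⬝ᵥ x = ((Mw γ u).updateRow 5 x).det := by
  have hx : x = ∑ i, x i • (Pi.single i 1 : Fin 6 → ℝ) := by
    funext j
    simp [Pi.single_apply]
  conv_rhs => rw [hx]
  rw [det_updateRow_lin (M := Mw γ u) (r := 5)]
  simp [dotProduct, pw, mul_comm]

lemma pw_orth (u : ℝ) (j : Fin 6) (hj : j ≠ 5) : pw γ u ⬝ᵥ wd γ (j:ℕ) u = 0 := by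
  rw [show wd γ (j:ℕ) u = Mw γ u j from rfl, pw_dot, Matrix.det_updateRow_eq_zero hj]

lemma pw_w5 (u : ℝ) : pw γ u ⬝ᵥ wd γ 5 u = Dw γ u := by
  rw [show wd γ 5 u = Mw γ u 5 from rfl, pw_dot, Matrix.updateRow_eq_self]
  rfl

lemma pw_smooth (hγ : ContDiff ℝ (⊤:ℕ∞) γ) (i : Fin 6) :
    ContDiff ℝ (⊤:ℕ∞) (fun u => pw γ u i) := by
  apply contDiff_det6
  intro a b
  by_cases ha : a = 5
  · subst ha
    simp only [Matrix.updateRow_self]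
    exact contDiff_const
  · simp only [Matrix.updateRow_ne ha]
    exact wd_smooth hγ _ _

lemma Dw_smooth (hγ : ContDiff ℝ (⊤:ℕ∞) γ) : ContDiff ℝ (⊤:ℕ∞) (Dw γ) :=
  contDiff_det6 fun a b => wd_smooth hγ _ _

lemma pw_hasDeriv (hγ : ContDiff ℝ (⊤:ℕ∞) γ) (u : ℝ) (i : Fin 6) :
    HasDerivAt (fun x => pw γ x i) (pw' γ u i) u :=
  (((pw_smooth hγ i).differentiable (by simp)) u).hasDerivAt

end Curve


/-- Fourth derivative of a square at a double zero. -/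
lemma sq_itd4 {F : ℝ → ℝ} (hF : ContDiff ℝ (⊤:ℕ∞) F) (u : ℝ) (h0 : F u = 0)
    (h1 : iteratedDeriv 1 F u = 0) :
    (∀ j ≤ 3, iteratedDeriv j (fun x => F x * F x) u = 0) ∧
      iteratedDeriv 4 (fun x => F x * F x) u = 6 * (iteratedDeriv 2 F u) * (iteratedDeriv 2 F u) := by
  have hd : ∀ n x, HasDerivAt (iteratedDeriv n F) (iteratedDeriv (n+1) F x) x := fun n x => by
    rw [iteratedDeriv_succ]; exact ((itd_diff hF n) x).hasDerivAt
  have hF0 : ∀ x, HasDerivAt F (iteratedDeriv 1 F x) x := fun x => by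
    simpa only [iteratedDeriv_zero] using hd 0 x
  set F1 := iteratedDeriv 1 F
  set F2 := iteratedDeriv 2 F
  set F3 := iteratedDeriv 3 F
  set F4 := iteratedDeriv 4 F
  have e1 : deriv (fun x => F x * F x) = fun x => 2 * (F x * F1 x) := by
    funext x; exact (((hF0 x).mul (hF0 x)).deriv).trans (by ring)
  have e2 : deriv (fun x => 2 * (F x * F1 x)) = fun x => 2 * (F1 x * F1 x) + 2 * (F x * F2 x) := by
    funext x
    exact ((((hF0 x).mul (hd 1 x)).const_mul 2).deriv).trans (by ring)
  have e3 : deriv (fun x => 2 * (F1 x * F1 x) + 2 * (F x * F2 x)) =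
      fun x => 6 * (F1 x * F2 x) + 2 * (F x * F3 x) := by
    funext x
    exact (((((hd 1 x).mul (hd 1 x)).const_mul 2).add
      (((hF0 x).mul (hd 2 x)).const_mul 2)).deriv).trans (by ring)
  have e4 : deriv (fun x => 6 * (F1 x * F2 x) + 2 * (F x * F3 x)) u =
      6 * (F2 u * F2 u) + 6 * (F1 u * F3 u) + (2 * (F1 u * F3 u) + 2 * (F u * F4 u)) := by
    exact (((((hd 1 u).mul (hd 2 u)).const_mul 6).add
      (((hF0 u).mul (hd 3 u)).const_mul 2)).deriv).trans (by ring)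
  have i1 : iteratedDeriv 1 (fun x => F x * F x) = fun x => 2 * (F x * F1 x) := by
    rw [iteratedDeriv_one, e1]
  have i2 : iteratedDeriv 2 (fun x => F x * F x) = fun x => 2 * (F1 x * F1 x) + 2 * (F x * F2 x) := by
    rw [show iteratedDeriv 2 (fun x => F x * F x) = deriv (iteratedDeriv 1 fun x => F x * F x)
      from iteratedDeriv_succ, i1, e2]
  have i3 : iteratedDeriv 3 (fun x => F x * F x) =
      fun x => 6 * (F1 x * F2 x) + 2 * (F x * F3 x) := by
    rw [show iteratedDeriv 3 (fun x => F x * F x) = deriv (iteratedDeriv 2 fun x => F x * F x)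
      from iteratedDeriv_succ, i2, e3]
  have i4 : iteratedDeriv 4 (fun x => F x * F x) u =
      6 * (F2 u * F2 u) + 6 * (F1 u * F3 u) + (2 * (F1 u * F3 u) + 2 * (F u * F4 u)) := by
    rw [show iteratedDeriv 4 (fun x => F x * F x) = deriv (iteratedDeriv 3 fun x => F x * F x)
      from iteratedDeriv_succ, i3]
    exact e4
  constructor
  · intro j hj
    interval_cases j
    · simpa [iteratedDeriv_zero] using mul_eq_zero_of_left h0 (F u)
    · rw [i1]; rw [show (fun x => 2 * (F x * F1 x)) u = 2 * (F u * F1 u) from rfl, h1]; ring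
    · rw [i2]; show 2 * (F1 u * F1 u) + 2 * (F u * F2 u) = 0; rw [h0, h1]; ring
    · rw [i3]; show 6 * (F1 u * F2 u) + 2 * (F u * F3 u) = 0; rw [h0, h1]; ring
  · rw [i4, h0, h1]; ring

section Curve2

variable {γ : ℝ → V3}

lemma det3_eq (a b c : V3) : det3 a b c =
    a 0 * b 1 * c 2 - a 0 * b 2 * c 1 - a 1 * b 0 * c 2 + a 1 * b 2 * c 0 +
      a 2 * b 0 * c 1 - a 2 * b 1 * c 0 := by
  simp [det3, Matrix.det_fin_three]

lemma det3_aba (a b : V3) : det3 a b a = 0 := by rw [det3_eq]; ring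
lemma det3_abb (a b : V3) : det3 a b b = 0 := by rw [det3_eq]; ring

lemma dot_wd (hγ : ContDiff ℝ (⊤:ℕ∞) γ) (c : Fin 6 → ℝ) (j : ℕ) (u : ℝ) :
    iteratedDeriv j (fun x => c ⬝ᵥ nuV (γ x)) u = c ⬝ᵥ wd γ j u := by
  have h := iteratedDeriv_lincomb (Wfun_smooth hγ) c j
  have e : (fun x => c ⬝ᵥ nuV (γ x)) = fun x => ∑ i, c i * Wfun γ i x := rfl
  rw [e, h]
  rfl

lemma gamma_hasDeriv (hγ : ContDiff ℝ (⊤:ℕ∞) γ) (x : ℝ) (i : Fin 3) :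
    HasDerivAt (fun y => γ y i) (deriv γ x i) x :=
  hasDerivAt_pi.mp ((hγ.differentiable (by simp)) x).hasDerivAt i

lemma dgamma_smooth (hγ : ContDiff ℝ (⊤:ℕ∞) γ) : ContDiff ℝ (⊤:ℕ∞) (deriv γ) :=
  (contDiff_infty_iff_deriv.mp hγ).2

lemma dgamma_hasDeriv (hγ : ContDiff ℝ (⊤:ℕ∞) γ) (x : ℝ) (i : Fin 3) :
    HasDerivAt (fun y => deriv γ y i) (deriv (deriv γ) x i) x :=
  gamma_hasDeriv (dgamma_smooth hγ) x i

lemma Fc_hasDeriv (hγ : ContDiff ℝ (⊤:ℕ∞) γ) (c : V3) (x : ℝ) :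
    HasDerivAt (fun y => c ⬝ᵥ γ y) (c ⬝ᵥ deriv γ x) x := by
  have := hasDerivAt_dot (f := fun _ => c) (g := γ) (f' := 0) (g' := deriv γ x)
    (fun i => hasDerivAt_const x (c i)) (fun i => gamma_hasDeriv hγ x i)
  simpa using this

lemma Fc_smooth (hγ : ContDiff ℝ (⊤:ℕ∞) γ) (c : V3) :
    ContDiff ℝ (⊤:ℕ∞) (fun y => c ⬝ᵥ γ y) := by
  show ContDiff ℝ (⊤:ℕ∞) fun y => ∑ i, c i * γ y i
  exact ContDiff.sum fun i _ => contDiff_const.mul (comp_smooth hγ i)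

lemma Fc_itd1 (hγ : ContDiff ℝ (⊤:ℕ∞) γ) (c : V3) :
    iteratedDeriv 1 (fun y => c ⬝ᵥ γ y) = fun x => c ⬝ᵥ deriv γ x := by
  rw [iteratedDeriv_one]
  funext x
  exact (Fc_hasDeriv hγ c x).deriv

lemma Fc_itd2 (hγ : ContDiff ℝ (⊤:ℕ∞) γ) (c : V3) (u : ℝ) :
    iteratedDeriv 2 (fun y => c ⬝ᵥ γ y) u = c ⬝ᵥ deriv (deriv γ) u := by
  rw [show iteratedDeriv 2 (fun y => c ⬝ᵥ γ y) = deriv (iteratedDeriv 1 fun y => c ⬝ᵥ γ y)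
    from iteratedDeriv_succ, Fc_itd1 hγ c]
  exact (Fc_hasDeriv (dgamma_smooth hγ) c u).deriv

def cvec (γ : ℝ → V3) (u : ℝ) : V3 := cross3 (γ u) (deriv γ u)

def mw (γ : ℝ → V3) (u : ℝ) : Fin 6 → ℝ := mvec (cvec γ u)

lemma cvec_dot (u : ℝ) (x : V3) : cvec γ u ⬝ᵥ x = det3 (γ u) (deriv γ u) x := cross3_dot _ _ _

lemma mw_wd (hγ : ContDiff ℝ (⊤:ℕ∞) γ) (u : ℝ) :
    (∀ j ≤ 3, mw γ u ⬝ᵥ wd γ j u = 0) ∧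
      mw γ u ⬝ᵥ wd γ 4 u = 6 * hdet γ u * hdet γ u := by
  have key : ∀ j : ℕ, mw γ u ⬝ᵥ wd γ j u =
      iteratedDeriv j (fun x => (cvec γ u ⬝ᵥ γ x) * (cvec γ u ⬝ᵥ γ x)) u := by
    intro j
    rw [← dot_wd hγ (mw γ u) j u]
    congr 1
    funext x
    rw [show mw γ u ⬝ᵥ nuV (γ x) = (cvec γ u ⬝ᵥ γ x) ^ 2 from mvec_dot _ _]
    ring
  have h0 : cvec γ u ⬝ᵥ γ u = 0 := by rw [cvec_dot, det3_aba]
  have h1 : iteratedDeriv 1 (fun y => cvec γ u ⬝ᵥ γ y) u = 0 := by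
    rw [Fc_itd1 hγ]
    show cvec γ u ⬝ᵥ deriv γ u = 0
    rw [cvec_dot, det3_abb]
  have h2 : iteratedDeriv 2 (fun y => cvec γ u ⬝ᵥ γ y) u = hdet γ u := by
    rw [Fc_itd2 hγ, cvec_dot]; rfl
  obtain ⟨hlow, h4⟩ := sq_itd4 (Fc_smooth hγ (cvec γ u)) u h0 h1
  constructor
  · intro j hj; rw [key j]; exact hlow j hj
  · rw [key 4, h4, h2]

lemma pw'_orth (hγ : ContDiff ℝ (⊤:ℕ∞) γ) (u : ℝ) (j : Fin 6) (hj : j ≠ 5) :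
    pw' γ u ⬝ᵥ wd γ (j:ℕ) u + pw γ u ⬝ᵥ wd γ ((j:ℕ)+1) u = 0 := by
  have h1 : ∀ x, pw γ x ⬝ᵥ wd γ (j:ℕ) x = 0 := fun x => pw_orth x j hj
  have h2 : HasDerivAt (fun x => pw γ x ⬝ᵥ wd γ (j:ℕ) x)
      (pw' γ u ⬝ᵥ wd γ (j:ℕ) u + pw γ u ⬝ᵥ wd γ ((j:ℕ)+1) u) u :=
    hasDerivAt_dot (fun i => pw_hasDeriv hγ u i) (fun i => wd_deriv hγ (j:ℕ) u i)
  have h3 : HasDerivAt (fun x => pw γ x ⬝ᵥ wd γ (j:ℕ) x) 0 u := by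
    rw [funext h1]
    exact hasDerivAt_const u 0
  exact h2.unique h3

end Curve2

section Curve3

variable {γ : ℝ → V3}

@[simp] lemma vec3_0 (a b c : ℝ) : ![a,b,c] 0 = a := rfl
@[simp] lemma vec3_1 (a b c : ℝ) : ![a,b,c] 1 = b := rfl
@[simp] lemma vec3_2 (a b c : ℝ) : ![a,b,c] 2 = c := rfl

lemma orth_eq_zero {u : ℝ} (hD : Dw γ u ≠ 0) {c : Fin 6 → ℝ}
    (h : ∀ j : Fin 6, c ⬝ᵥ wd γ (j:ℕ) u = 0) : c = 0 := by
  by_contra hc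
  apply hD
  apply Matrix.exists_mulVec_eq_zero_iff.mp
  refine ⟨c, hc, ?_⟩
  funext j
  show Mw γ u j ⬝ᵥ c = 0
  rw [dotProduct_comm]
  exact h j

lemma Dw_ne_of_nosex (hγ : ContDiff ℝ (⊤:ℕ∞) γ)
    (hnosex : ¬ ∃ t₀ ∈ Set.Icc (0:ℝ) 1, ∃ Q : QuadraticForm ℝ V3, Q ≠ 0 ∧
      VanishesToOrder (fun t => Q (γ t)) 6 t₀)
    {u : ℝ} (hu : u ∈ Set.Icc (0:ℝ) 1) : Dw γ u ≠ 0 := by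
  intro h
  obtain ⟨q, hq0, hq⟩ := Matrix.exists_mulVec_eq_zero_iff.mpr h
  apply hnosex
  refine ⟨u, hu, quadOf q, quadOf_ne_zero hq0, ?_⟩
  intro j hj
  have e : (fun t => quadOf q (γ t)) = fun t => q ⬝ᵥ nuV (γ t) := funext fun t => quadOf_apply q (γ t)
  rw [e, dot_wd hγ q j u]
  have := congrFun hq ⟨j, hj⟩
  have e2 : (Mw γ u *ᵥ q) ⟨j, hj⟩ = wd γ j u ⬝ᵥ q := rfl
  rw [e2] at this
  rw [dotProduct_comm]
  exact this

def aco (γ : ℝ → V3) (u : ℝ) : ℝ := - Dw γ u / (6 * hdet γ u * hdet γ u)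

def bco (γ : ℝ → V3) (u : ℝ) : ℝ :=
  (pw' γ u ⬝ᵥ wd γ 5 u - aco γ u * (mw γ u ⬝ᵥ wd γ 5 u)) / Dw γ u

lemma aco_ne {u : ℝ} (hD : Dw γ u ≠ 0) (hh : hdet γ u ≠ 0) : aco γ u ≠ 0 := by
  unfold aco
  exact div_ne_zero (neg_ne_zero.mpr hD) (by positivity)

lemma pw'_decomp (hγ : ContDiff ℝ (⊤:ℕ∞) γ) {u : ℝ} (hD : Dw γ u ≠ 0) (hh : hdet γ u ≠ 0) :
    pw' γ u = aco γ u • mw γ u + bco γ u • pw γ u := by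
  have key : pw' γ u - (aco γ u • mw γ u + bco γ u • pw γ u) = 0 := by
    apply orth_eq_zero hD
    intro j
    rw [sub_dotProduct, add_dotProduct, smul_dotProduct,
      smul_dotProduct]
    have hmw := mw_wd hγ u
    have horthlow : ∀ jj : ℕ, jj < 5 → pw γ u ⬝ᵥ wd γ jj u = 0 := fun jj hjj =>
      pw_orth u ⟨jj, by omega⟩ (by simp [Fin.ext_iff]; omega)
    have horth' : ∀ jj : ℕ, jj < 5 → pw' γ u ⬝ᵥ wd γ jj u + pw γ u ⬝ᵥ wd γ (jj+1) u = 0 := fun jj hjj =>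
      pw'_orth hγ u ⟨jj, by omega⟩ (by simp [Fin.ext_iff]; omega)
    fin_cases j
    · have h1 := horth' 0 (by norm_num)
      have h2 := horthlow 1 (by norm_num)
      have h3 := hmw.1 0 (by norm_num)
      have h4 := horthlow 0 (by norm_num)
      show pw' γ u ⬝ᵥ wd γ 0 u - (aco γ u * (mw γ u ⬝ᵥ wd γ 0 u) + bco γ u * (pw γ u ⬝ᵥ wd γ 0 u)) = 0
      norm_num at h1 h2 h3 h4 ⊢
      rw [h3, h4]
      linarith
    · have h1 := horth' 1 (by norm_num)
      have h2 := horthlow 2 (by norm_num)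
      have h3 := hmw.1 1 (by norm_num)
      have h4 := horthlow 1 (by norm_num)
      show pw' γ u ⬝ᵥ wd γ 1 u - (aco γ u * (mw γ u ⬝ᵥ wd γ 1 u) + bco γ u * (pw γ u ⬝ᵥ wd γ 1 u)) = 0
      norm_num at h1 h2 h3 h4 ⊢
      rw [h3, h4]
      linarith
    · have h1 := horth' 2 (by norm_num)
      have h2 := horthlow 3 (by norm_num)
      have h3 := hmw.1 2 (by norm_num)
      have h4 := horthlow 2 (by norm_num)
      show pw' γ u ⬝ᵥ wd γ 2 u - (aco γ u * (mw γ u ⬝ᵥ wd γ 2 u) + bco γ u * (pw γ u ⬝ᵥ wd γ 2 u)) = 0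
      norm_num at h1 h2 h3 h4 ⊢
      rw [h3, h4]
      linarith
    · have h1 := horth' 3 (by norm_num)
      have h2 := horthlow 4 (by norm_num)
      have h3 := hmw.1 3 (by norm_num)
      have h4 := horthlow 3 (by norm_num)
      show pw' γ u ⬝ᵥ wd γ 3 u - (aco γ u * (mw γ u ⬝ᵥ wd γ 3 u) + bco γ u * (pw γ u ⬝ᵥ wd γ 3 u)) = 0
      norm_num at h1 h2 h3 h4 ⊢
      rw [h3, h4]
      linarith
    · have h1 := horth' 4 (by norm_num)
      have h3 := hmw.2
      have h4 := horthlow 4 (by norm_num)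
      have h5 := pw_w5 (γ := γ) u
      show pw' γ u ⬝ᵥ wd γ 4 u - (aco γ u * (mw γ u ⬝ᵥ wd γ 4 u) + bco γ u * (pw γ u ⬝ᵥ wd γ 4 u)) = 0
      norm_num at h1 h3 h4 h5 ⊢
      rw [h3, h4]
      have e1 : pw' γ u ⬝ᵥ wd γ 4 u = - Dw γ u := by
        rw [← h5]; linarith
      rw [e1]
      unfold aco
      field_simp
      ring
    · have h5 := pw_w5 (γ := γ) u
      show pw' γ u ⬝ᵥ wd γ 5 u - (aco γ u * (mw γ u ⬝ᵥ wd γ 5 u) + bco γ u * (pw γ u ⬝ᵥ wd γ 5 u)) = 0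
      rw [h5]
      unfold bco
      field_simp
      ring
  exact sub_eq_zero.mp key

lemma cont_dot {ι : Type*} [Fintype ι] {f g : ℝ → ι → ℝ}
    (hf : ∀ i, Continuous fun u => f u i) (hg : ∀ i, Continuous fun u => g u i) :
    Continuous fun u => f u ⬝ᵥ g u := by
  show Continuous fun u => ∑ i, f u i * g u i
  exact continuous_finset_sum _ fun i _ => (hf i).mul (hg i)

lemma cont_gamma (hγ : ContDiff ℝ (⊤:ℕ∞) γ) (i : Fin 3) : Continuous fun u => γ u i :=
  (comp_smooth hγ i).continuous

lemma cont_dgamma (hγ : ContDiff ℝ (⊤:ℕ∞) γ) (i : Fin 3) : Continuous fun u => deriv γ u i :=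
  (comp_smooth (dgamma_smooth hγ) i).continuous

lemma cont_ddgamma (hγ : ContDiff ℝ (⊤:ℕ∞) γ) (i : Fin 3) :
    Continuous fun u => deriv (deriv γ) u i :=
  (comp_smooth (dgamma_smooth (dgamma_smooth hγ)) i).continuous

lemma cont_hdet (hγ : ContDiff ℝ (⊤:ℕ∞) γ) : Continuous (hdet γ) := by
  have e : hdet γ = fun u => γ u 0 * deriv γ u 1 * deriv (deriv γ) u 2
      - γ u 0 * deriv γ u 2 * deriv (deriv γ) u 1
      - γ u 1 * deriv γ u 0 * deriv (deriv γ) u 2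
      + γ u 1 * deriv γ u 2 * deriv (deriv γ) u 0
      + γ u 2 * deriv γ u 0 * deriv (deriv γ) u 1
      - γ u 2 * deriv γ u 1 * deriv (deriv γ) u 0 := funext fun u => det3_eq _ _ _
  rw [e]
  have h0 := cont_gamma hγ; have h1 := cont_dgamma hγ; have h2 := cont_ddgamma hγ
  exact (((((((h0 0).mul (h1 1)).mul (h2 2)).sub (((h0 0).mul (h1 2)).mul (h2 1))).sub
    (((h0 1).mul (h1 0)).mul (h2 2))).add (((h0 1).mul (h1 2)).mul (h2 0))).add
    (((h0 2).mul (h1 0)).mul (h2 1))).sub (((h0 2).mul (h1 1)).mul (h2 0))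

lemma cont_cvec (hγ : ContDiff ℝ (⊤:ℕ∞) γ) (i : Fin 3) : Continuous fun u => cvec γ u i := by
  have h0 := cont_gamma hγ; have h1 := cont_dgamma hγ
  fin_cases i
  · show Continuous fun u => γ u 1 * deriv γ u 2 - γ u 2 * deriv γ u 1
    exact ((h0 1).mul (h1 2)).sub ((h0 2).mul (h1 1))
  · show Continuous fun u => γ u 2 * deriv γ u 0 - γ u 0 * deriv γ u 2
    exact ((h0 2).mul (h1 0)).sub ((h0 0).mul (h1 2))
  · show Continuous fun u => γ u 0 * deriv γ u 1 - γ u 1 * deriv γ u 0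
    exact ((h0 0).mul (h1 1)).sub ((h0 1).mul (h1 0))

lemma cont_mw (hγ : ContDiff ℝ (⊤:ℕ∞) γ) (i : Fin 6) : Continuous fun u => mw γ u i := by
  have hc := cont_cvec hγ
  fin_cases i
  · exact ((hc 0).mul (hc 0))
  · exact ((hc 1).mul (hc 1))
  · exact ((hc 2).mul (hc 2))
  · exact continuous_const.mul ((hc 0).mul (hc 1))
  · exact continuous_const.mul ((hc 0).mul (hc 2))
  · exact continuous_const.mul ((hc 1).mul (hc 2))

lemma cont_wd (hγ : ContDiff ℝ (⊤:ℕ∞) γ) (j : ℕ) (i : Fin 6) :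
    Continuous fun u => wd γ j u i := (wd_smooth hγ j i).continuous

lemma cont_pw (hγ : ContDiff ℝ (⊤:ℕ∞) γ) (i : Fin 6) : Continuous fun u => pw γ u i :=
  (pw_smooth hγ i).continuous

lemma cont_pw' (hγ : ContDiff ℝ (⊤:ℕ∞) γ) (i : Fin 6) : Continuous fun u => pw' γ u i :=
  (deriv_smooth (pw_smooth hγ i)).continuous

lemma cont_Dw (hγ : ContDiff ℝ (⊤:ℕ∞) γ) : Continuous (Dw γ) := (Dw_smooth hγ).continuous

/-- derivative of the tangent-line form. -/
lemma ell_hasDeriv (hγ : ContDiff ℝ (⊤:ℕ∞) γ) (v : V3) (u : ℝ) :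
    HasDerivAt (fun x => det3 (γ x) (deriv γ x) v)
      (det3 (γ u) (deriv (deriv γ) u) v) u := by
  have e : (fun x => det3 (γ x) (deriv γ x) v) = fun x =>
      γ x 0 * deriv γ x 1 * v 2 - γ x 0 * deriv γ x 2 * v 1 - γ x 1 * deriv γ x 0 * v 2
      + γ x 1 * deriv γ x 2 * v 0 + γ x 2 * deriv γ x 0 * v 1 - γ x 2 * deriv γ x 1 * v 0 :=
    funext fun x => det3_eq _ _ _
  rw [e, det3_eq]
  have hg := gamma_hasDeriv hγ u
  have hdg := dgamma_hasDeriv hγ u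
  have H := (((((((hg 0).mul (hdg 1)).mul_const (v 2)).sub
      (((hg 0).mul (hdg 2)).mul_const (v 1))).sub
      (((hg 1).mul (hdg 0)).mul_const (v 2))).add
      (((hg 1).mul (hdg 2)).mul_const (v 0))).add
      (((hg 2).mul (hdg 0)).mul_const (v 1))).sub
      (((hg 2).mul (hdg 1)).mul_const (v 0))
  refine H.congr_deriv ?_
  ring

/-- if v is killed by the two forms then v is proportional to γ u. -/
lemma point_span (hγ : ContDiff ℝ (⊤:ℕ∞) γ) {u : ℝ} (hh : hdet γ u ≠ 0) {v : V3}
    (h1 : det3 (γ u) (deriv γ u) v = 0) (h2 : det3 (γ u) (deriv (deriv γ) u) v = 0) :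
    ∃ c : ℝ, v = c • γ u := by
  set M : Matrix (Fin 3) (Fin 3) ℝ := Matrix.of ![γ u, deriv γ u, deriv (deriv γ) u] with hM
  have hdetM : M.det = hdet γ u := rfl
  have hunit : IsUnit M := by
    rw [Matrix.isUnit_iff_isUnit_det, hdetM]
    exact isUnit_iff_ne_zero.mpr hh
  obtain ⟨c, hc⟩ := (Matrix.vecMul_surjective_iff_isUnit.mpr hunit) v
  have hv : ∀ i, v i = c 0 * γ u i + c 1 * deriv γ u i + c 2 * deriv (deriv γ) u i := by
    intro i
    rw [← hc]
    show (∑ j, c j * M j i) = _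
    rw [Fin.sum_univ_three]
    rfl
  have hhe : hdet γ u = det3 (γ u) (deriv γ u) (deriv (deriv γ) u) := rfl
  have hc2 : c 2 * hdet γ u = 0 := by
    rw [det3_eq] at h1
    rw [hhe, det3_eq]
    rw [hv 0, hv 1, hv 2] at h1
    linear_combination h1
  have hc1 : c 1 * hdet γ u = 0 := by
    rw [det3_eq] at h2
    rw [hhe, det3_eq]
    rw [hv 0, hv 1, hv 2] at h2
    linear_combination -h2
  have hc2' : c 2 = 0 := by
    rcases mul_eq_zero.mp hc2 with h | h
    · exact h
    · exact absurd h hh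
  have hc1' : c 1 = 0 := by
    rcases mul_eq_zero.mp hc1 with h | h
    · exact h
    · exact absurd h hh
  refine ⟨c 0, funext fun i => ?_⟩
  rw [hv i, hc1', hc2']
  simp [mul_comm]

end Curve3

section Core

variable {γ : ℝ → V3}

lemma core_lemma (hγ : ContDiff ℝ (⊤:ℕ∞) γ)
    (hsimple : ∀ s ∈ Set.Icc (0:ℝ) 1, ∀ t ∈ Set.Icc (0:ℝ) 1,
      ¬ LinearIndependent ℝ ![γ s, γ t] → s = t)
    (hinfl : ∀ t ∈ Set.Icc (0:ℝ) 1, hdet γ t ≠ 0)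
    (hD : ∀ u ∈ Set.Icc (0:ℝ) 1, Dw γ u ≠ 0)
    {s t : ℝ} (hs : s ∈ Set.Icc (0:ℝ) 1) (ht : t ∈ Set.Icc (0:ℝ) 1) (hst : s < t)
    {v : V3} (hv : v ≠ 0) (hgs : pw γ s ⬝ᵥ nuV v = 0) (hgt : pw γ t ⬝ᵥ nuV v = 0) : False := by
  have hsub : Set.Icc s t ⊆ Set.Icc (0:ℝ) 1 := Set.Icc_subset_Icc hs.1 ht.2
  set g : ℝ → ℝ := fun u => pw γ u ⬝ᵥ nuV v with hgdef
  set l : ℝ → ℝ := fun u => cvec γ u ⬝ᵥ v with hldef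
  have hgd : ∀ u, HasDerivAt g (pw' γ u ⬝ᵥ nuV v) u := by
    intro u
    have := hasDerivAt_dot (fun i => pw_hasDeriv hγ u i)
      (fun i => hasDerivAt_const (𝕜 := ℝ) u (nuV v i))
    simpa using this
  have hode : ∀ u ∈ Set.Icc (0:ℝ) 1,
      pw' γ u ⬝ᵥ nuV v = aco γ u * (l u * l u) + bco γ u * g u := by
    intro u hu
    rw [pw'_decomp hγ (hD u hu) (hinfl u hu), add_dotProduct, smul_dotProduct,
      smul_dotProduct]
    have hm : mw γ u ⬝ᵥ nuV v = (cvec γ u ⬝ᵥ v) ^ 2 := mvec_dot _ _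
    simp only [smul_eq_mul]
    rw [hm, hgdef, hldef]
    ring
  -- continuity of coefficients at points of [0,1]
  have hcont6h : Continuous fun u => 6 * hdet γ u * hdet γ u :=
    (continuous_const.mul (cont_hdet hγ)).mul (cont_hdet hγ)
  have hacont : ∀ u ∈ Set.Icc (0:ℝ) 1, ContinuousAt (aco γ) u := by
    intro u hu
    apply ContinuousAt.div ((cont_Dw hγ).neg.continuousAt) hcont6h.continuousAt
    have := hinfl u hu
    positivity
  have hbcont : ∀ u ∈ Set.Icc (0:ℝ) 1, ContinuousAt (bco γ) u := by
    intro u hu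
    apply ContinuousAt.div
    · exact ((cont_dot (cont_pw' hγ) (cont_wd hγ 5)).continuousAt).sub
        ((hacont u hu).mul ((cont_dot (cont_mw hγ) (cont_wd hγ 5)).continuousAt))
    · exact (cont_Dw hγ).continuousAt
    · exact hD u hu
  have m1 : Measurable (aco γ) :=
    ((cont_Dw hγ).neg.measurable).div hcont6h.measurable
  have m2 : Measurable (bco γ) :=
    (((cont_dot (cont_pw' hγ) (cont_wd hγ 5)).measurable).sub
      (m1.mul ((cont_dot (cont_mw hγ) (cont_wd hγ 5)).measurable))).div ((cont_Dw hγ).measurable)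
  set B : ℝ → ℝ := fun u => ∫ x in s..u, bco γ x with hBdef
  have hBd : ∀ u ∈ Set.Icc s t, HasDerivAt B (bco γ u) u := by
    intro u hu
    apply intervalIntegral.integral_hasDerivAt_right
    · apply ContinuousOn.intervalIntegrable
      intro x hx
      rw [Set.uIcc_of_le hu.1] at hx
      exact (hbcont x (hsub ⟨hx.1, le_trans hx.2 hu.2⟩)).continuousWithinAt
    · exact m2.aestronglyMeasurable.stronglyMeasurableAtFilter
    · exact hbcont u (hsub hu)
  set H : ℝ → ℝ := fun u => g u * Real.exp (-(B u)) with hHdef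
  have hHd : ∀ u ∈ Set.Icc s t,
      HasDerivAt H ((aco γ u * (l u * l u)) * Real.exp (-(B u))) u := by
    intro u hu
    have h1 := (hgd u).mul (((hBd u hu).neg).exp)
    refine h1.congr_deriv ?_
    rw [hode u (hsub hu), Pi.neg_apply]
    ring
  have hHs : H s = 0 := by simp [hHdef, hgdef, hgs]
  have hHt : H t = 0 := by simp [hHdef, hgdef, hgt]
  have hHcont : ContinuousOn H (Set.Icc s t) := fun x hx =>
    (hHd x hx).continuousAt.continuousWithinAt
  have hHdiff : DifferentiableOn ℝ H (interior (Set.Icc s t)) := by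
    intro x hx
    rw [interior_Icc] at hx
    exact ((hHd x (Set.Ioo_subset_Icc_self hx)).differentiableAt).differentiableWithinAt
  have hmemS : s ∈ Set.Icc s t := ⟨le_refl s, le_of_lt hst⟩
  have hmemT : t ∈ Set.Icc s t := ⟨le_of_lt hst, le_refl t⟩
  have hacontOn : ContinuousOn (aco γ) (Set.Icc s t) := fun x hx =>
    (hacont x (hsub hx)).continuousWithinAt
  have hasign : (∀ u ∈ Set.Icc s t, 0 < aco γ u) ∨ (∀ u ∈ Set.Icc s t, aco γ u < 0) := by
    rcases (aco_ne (hD s hs) (hinfl s hs)).lt_or_gt with h | h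
    · right
      intro u hu
      rcases (aco_ne (hD u (hsub hu)) (hinfl u (hsub hu))).lt_or_gt with h' | h'
      · exact h'
      · exfalso
        have hiv := intermediate_value_Icc hu.1 (hacontOn.mono (Set.Icc_subset_Icc_right hu.2))
        have h0 : (0:ℝ) ∈ Set.Icc (aco γ s) (aco γ u) := ⟨le_of_lt h, le_of_lt h'⟩
        obtain ⟨x, hx, hx0⟩ := hiv h0
        exact aco_ne (hD x (hsub ⟨hx.1, le_trans hx.2 hu.2⟩))
          (hinfl x (hsub ⟨hx.1, le_trans hx.2 hu.2⟩)) hx0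
    · left
      intro u hu
      rcases (aco_ne (hD u (hsub hu)) (hinfl u (hsub hu))).lt_or_gt with h' | h'
      · exfalso
        have hiv := intermediate_value_Icc' hu.1 (hacontOn.mono (Set.Icc_subset_Icc_right hu.2))
        have h0 : (0:ℝ) ∈ Set.Icc (aco γ u) (aco γ s) := ⟨le_of_lt h', le_of_lt h⟩
        obtain ⟨x, hx, hx0⟩ := hiv h0
        exact aco_ne (hD x (hsub ⟨hx.1, le_trans hx.2 hu.2⟩))
          (hinfl x (hsub ⟨hx.1, le_trans hx.2 hu.2⟩)) hx0
      · exact h'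
  have hHzero : ∀ u ∈ Set.Icc s t, H u = 0 := by
    rcases hasign with hpos | hneg
    · have hmono : MonotoneOn H (Set.Icc s t) := by
        apply monotoneOn_of_deriv_nonneg (convex_Icc s t) hHcont hHdiff
        intro x hx
        rw [interior_Icc] at hx
        rw [(hHd x (Set.Ioo_subset_Icc_self hx)).deriv]
        have hpx := hpos x (Set.Ioo_subset_Icc_self hx)
        exact mul_nonneg (mul_nonneg hpx.le (mul_self_nonneg _)) (Real.exp_pos _).le
      intro u hu
      have h1 : H u ≤ H t := hmono hu hmemT hu.2
      have h2 : H s ≤ H u := hmono hmemS hu hu.1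
      rw [hHs] at h2; rw [hHt] at h1
      linarith
    · have hmono : AntitoneOn H (Set.Icc s t) := by
        apply antitoneOn_of_deriv_nonpos (convex_Icc s t) hHcont hHdiff
        intro x hx
        rw [interior_Icc] at hx
        rw [(hHd x (Set.Ioo_subset_Icc_self hx)).deriv]
        have h5 := hneg x (Set.Ioo_subset_Icc_self hx)
        have h6 : 0 ≤ l x * l x := mul_self_nonneg _
        have h7 : 0 ≤ (l x * l x) * Real.exp (-(B x)) := mul_nonneg h6 (Real.exp_pos _).le
        nlinarith
      intro u hu
      have h1 : H t ≤ H u := hmono hu hmemT hu.2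
      have h2 : H u ≤ H s := hmono hmemS hu hu.1
      rw [hHs] at h2; rw [hHt] at h1
      linarith
  have hlz : ∀ u ∈ Set.Ioo s t, l u = 0 := by
    intro u hu
    have hev : H =ᶠ[nhds u] fun _ => (0:ℝ) :=
      Filter.eventuallyEq_of_mem (Ioo_mem_nhds hu.1 hu.2)
        (fun x hx => hHzero x (Set.Ioo_subset_Icc_self hx))
    have h0 : HasDerivAt H 0 u := (hasDerivAt_const u (0:ℝ)).congr_of_eventuallyEq hev
    have := (hHd u (Set.Ioo_subset_Icc_self hu)).unique h0
    have hane := aco_ne (hD u (hsub (Set.Ioo_subset_Icc_self hu)))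
      (hinfl u (hsub (Set.Ioo_subset_Icc_self hu)))
    have hexp := Real.exp_pos (-(B u))
    by_contra hl0
    have : aco γ u * (l u * l u) * Real.exp (-(B u)) ≠ 0 :=
      mul_ne_zero (mul_ne_zero hane (mul_ne_zero hl0 hl0)) (ne_of_gt hexp)
    exact this ‹aco γ u * (l u * l u) * Real.exp (-(B u)) = 0›
  -- from l ≡ 0 on Ioo get v proportional to γ(u₀) for any u₀ in Ioo
  have hprop : ∀ u ∈ Set.Ioo s t, ∃ c : ℝ, v = c • γ u := by
    intro u hu
    have hufull := hsub (Set.Ioo_subset_Icc_self hu)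
    have hLfun : (fun x => det3 (γ x) (deriv γ x) v) =ᶠ[nhds u] fun _ => (0:ℝ) := by
      apply Filter.eventuallyEq_of_mem (Ioo_mem_nhds hu.1 hu.2)
      intro x hx
      have h9 : cvec γ x ⬝ᵥ v = 0 := hlz x hx
      rwa [cvec_dot] at h9
    have h0 : HasDerivAt (fun x => det3 (γ x) (deriv γ x) v) 0 u :=
      (hasDerivAt_const u (0:ℝ)).congr_of_eventuallyEq hLfun
    have h2 : det3 (γ u) (deriv (deriv γ) u) v = 0 := ((ell_hasDeriv hγ v u).unique h0)
    have h1 : det3 (γ u) (deriv γ u) v = 0 := by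
      have h9 : cvec γ u ⬝ᵥ v = 0 := hlz u hu
      rwa [cvec_dot] at h9
    exact point_span hγ (hinfl u hufull) h1 h2
  set u₀ : ℝ := s + (t - s)/3 with hu₀
  set u₁ : ℝ := s + 2*(t - s)/3 with hu₁
  have hu₀m : u₀ ∈ Set.Ioo s t := by constructor <;> (rw [hu₀]; linarith)
  have hu₁m : u₁ ∈ Set.Ioo s t := by constructor <;> (rw [hu₁]; linarith)
  obtain ⟨α, hα⟩ := hprop u₀ hu₀m
  obtain ⟨β, hβ⟩ := hprop u₁ hu₁m
  have hαne : α ≠ 0 := by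
    intro h
    apply hv
    rw [hα, h, zero_smul]
  have hnli : ¬ LinearIndependent ℝ ![γ u₀, γ u₁] := by
    intro hli
    rw [linearIndependent_fin2] at hli
    apply hli.2 (α⁻¹ * β)
    show (α⁻¹ * β) • γ u₁ = γ u₀
    have : γ u₀ = α⁻¹ • v := by
      rw [hα, smul_smul, inv_mul_cancel₀ hαne, one_smul]
    rw [this, hβ, smul_smul]
  have := hsimple u₀ (hsub (Set.Ioo_subset_Icc_self hu₀m)) u₁
    (hsub (Set.Ioo_subset_Icc_self hu₁m)) hnli
  rw [hu₀, hu₁] at this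
  have : (t - s)/3 = 2*(t-s)/3 := by linarith
  linarith

end Core

lemma reduce_to_pw {γ : ℝ → V3} (hγ : ContDiff ℝ (⊤:ℕ∞) γ)
    (hDW : ∀ u ∈ Set.Icc (0:ℝ) 1, Dw γ u ≠ 0)
    {u : ℝ} (hu : u ∈ Set.Icc (0:ℝ) 1) (Q : QuadraticForm ℝ V3) (hQ : Q ≠ 0)
    (hvan : VanishesToOrder (fun x => Q (γ x)) 5 u) {v : V3} (hQv : Q v = 0) :
    pw γ u ⬝ᵥ nuV v = 0 := by
  set q := coeffQ Q with hqdef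
  have hq : ∀ j : ℕ, j < 5 → q ⬝ᵥ wd γ j u = 0 := by
    intro j hj
    rw [← dot_wd hγ q j u]
    have e : (fun x => q ⬝ᵥ nuV (γ x)) = fun x => Q (γ x) :=
      funext fun x => (coeffQ_repr Q (γ x)).symm
    rw [e]
    exact hvan j hj
  set lam := (q ⬝ᵥ wd γ 5 u) / Dw γ u with hlamdef
  have hpr : q = lam • pw γ u := by
    have hz : q - lam • pw γ u = 0 := by
      apply orth_eq_zero (hDW u hu)
      intro j
      rw [sub_dotProduct, smul_dotProduct]
      by_cases hj5 : (j:ℕ) = 5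
      · rw [hj5, pw_w5]
        rw [hlamdef, smul_eq_mul, div_mul_cancel₀ _ (hDW u hu), sub_self]
      · have hlt : (j:ℕ) < 5 := by have := j.isLt; omega
        rw [hq _ hlt, pw_orth u j (Fin.ne_of_val_ne hj5)]
        simp
    have := sub_eq_zero.mp hz
    exact this
  have hlam : lam ≠ 0 := by
    intro h
    apply coeffQ_ne_zero hQ
    rw [← hqdef, hpr, h, zero_smul]
  have h0 : q ⬝ᵥ nuV v = 0 := by
    rw [hqdef, ← coeffQ_repr]
    exact hQv
  rw [hpr, smul_dotProduct, smul_eq_mul] at h0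
  exact (mul_eq_zero.mp h0).resolve_left hlam

/-- On an arc free of inflection and sextactic points, the osculating conics at
two different points do not meet. -/
theorem osculating_conics_disjoint
    (γ : ℝ → V3) (hsmooth : ContDiff ℝ (⊤ : ℕ∞) γ)
    (hne : ∀ t ∈ Set.Icc (0:ℝ) 1, γ t ≠ 0)
    (hreg : ∀ t ∈ Set.Icc (0:ℝ) 1, LinearIndependent ℝ ![γ t, deriv γ t])
    (hsimple : ∀ s ∈ Set.Icc (0:ℝ) 1, ∀ t ∈ Set.Icc (0:ℝ) 1,
      ¬ LinearIndependent ℝ ![γ s, γ t] → s = t)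
    (hinfl : ∀ t ∈ Set.Icc (0:ℝ) 1, hdet γ t ≠ 0)
    (hnosex : ¬ ∃ t₀ ∈ Set.Icc (0:ℝ) 1, ∃ Q : QuadraticForm ℝ V3, Q ≠ 0 ∧
      VanishesToOrder (fun t => Q (γ t)) 6 t₀) :
    ∀ s ∈ Set.Icc (0:ℝ) 1, ∀ t ∈ Set.Icc (0:ℝ) 1, s ≠ t →
      ∀ Qs Qt : QuadraticForm ℝ V3, Qs ≠ 0 → Qt ≠ 0 →
        VanishesToOrder (fun u => Qs (γ u)) 5 s →
        VanishesToOrder (fun u => Qt (γ u)) 5 t →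
        {v : V3 | Qs v = 0} ∩ {v : V3 | Qt v = 0} = {0} := by
  intro s hs t ht hst Qs Qt hQs hQt hv5s hv5t
  have hDW : ∀ u ∈ Set.Icc (0:ℝ) 1, Dw γ u ≠ 0 := fun u hu =>
    Dw_ne_of_nosex hsmooth hnosex hu
  ext v
  simp only [Set.mem_inter_iff, Set.mem_setOf_eq, Set.mem_singleton_iff]
  constructor
  · rintro ⟨h1, h2⟩
    by_contra hv
    have hps := reduce_to_pw hsmooth hDW hs Qs hQs hv5s h1
    have hpt := reduce_to_pw hsmooth hDW ht Qt hQt hv5t h2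
    rcases lt_or_gt_of_ne hst with h | h
    · exact core_lemma hsmooth hsimple hinfl hDW hs ht h hv hps hpt
    · exact core_lemma hsmooth hsimple hinfl hDW ht hs h hv hpt hps
  · intro h
    subst h
    constructor <;> simp [QuadraticMap.map_zero]
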